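/- Let g > 0 and G > 0 be real constants. The function (u, w) ↦ g/u + G·w⁴/u² is strictly convex on the open convex set {(u, w) ∈ ℝ² : u > 0, w > 0}. (Equivalently, the hydrostatic and vertical-elastic part Ẽ₁ = g·H + G·H²·A_cc of the Saint-Venant–Maxwell energy is a strictly convex function of the variables (H⁻¹, A_cc^{1/4}) on H > 0, A_cc > 0.) -/
import Mathlib


/-- For real constants `g > 0` and `G > 0`, the function
`(u, w) ↦ g/u + G·w⁴/u²` is strictly convex on the open convex set
`{(u, w) : u > 0, w > 0}`.  (Equivalently, `Ẽ₁ = g·H + G·H²·A_cc` is strictly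
convex in the variables `(H⁻¹, A_cc^{1/4})` on `H > 0`, `A_cc > 0`.) -/
theorem svm_vertical_energy_strictConvex (g G : ℝ) (hg : 0 < g) (hG : 0 < G) :
    StrictConvexOn ℝ {p : ℝ × ℝ | 0 < p.1 ∧ 0 < p.2}
      (fun p : ℝ × ℝ => g / p.1 + G * p.2 ^ 4 / p.1 ^ 2) := by
  constructor
  · exact (convex_Ioi (0:ℝ)).prod (convex_Ioi (0:ℝ))
  · rintro ⟨u1, w1⟩ ⟨hu1, hw1⟩ ⟨u2, w2⟩ ⟨hu2, hw2⟩ hne a b ha hb hab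
    simp only [Set.mem_setOf_eq] at hu1 hw1 hu2 hw2
    simp only [Prod.smul_mk, Prod.mk_add_mk, smul_eq_mul]
    set u : ℝ := a * u1 + b * u2 with hu_def
    set t1 : ℝ := w1 ^ 2 / u1 with ht1_def
    set t2 : ℝ := w2 ^ 2 / u2 with ht2_def
    set s : ℝ := (a * w1 + b * w2) ^ 2 / u with hs_def
    have hu : 0 < u := by rw [hu_def]; positivity
    have hden : (0:ℝ) < u1 * u2 := by positivity
    have hs0 : 0 ≤ s := by rw [hs_def]; positivity
    have ht10 : 0 ≤ t1 := by rw [ht1_def]; positivity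
    have ht20 : 0 ≤ t2 := by rw [ht2_def]; positivity
    -- hydrostatic part
    have e1 : a * (g / u1) + b * (g / u2) = (a * g * u2 + b * g * u1) / (u1 * u2) := by
      field_simp
    have num1 : (a * g * u2 + b * g * u1) * u - g * (u1 * u2) = g * (a * b * (u1 - u2) ^ 2) := by
      rw [hu_def]; linear_combination g * u1 * u2 * (a + b + 1) * hab
    -- elastic part (perspective of w²)
    have e2 : a * t1 + b * t2 = (a * w1 ^ 2 * u2 + b * w2 ^ 2 * u1) / (u1 * u2) := by
      rw [ht1_def, ht2_def]; field_simp
    have num2 : (a * w1 ^ 2 * u2 + b * w2 ^ 2 * u1) * u - (a * w1 + b * w2) ^ 2 * (u1 * u2)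
        = a * b * (w1 * u2 - w2 * u1) ^ 2 := by
      rw [hu_def]; ring
    have hB : (a * t1 + b * t2) ^ 2 ≤ a * t1 ^ 2 + b * t2 ^ 2 := by
      nlinarith [sq_nonneg (t1 - t2), mul_pos ha hb]
    have hrw : s ^ 2 = (a * w1 + b * w2) ^ 4 / u ^ 2 := by
      rw [hs_def, div_pow, ← pow_mul]
    have hrw1 : t1 ^ 2 = w1 ^ 4 / u1 ^ 2 := by rw [ht1_def, div_pow, ← pow_mul]
    have hrw2 : t2 ^ 2 = w2 ^ 4 / u2 ^ 2 := by rw [ht2_def, div_pow, ← pow_mul]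
    have hGrw : G * (a * w1 + b * w2) ^ 4 / u ^ 2 = G * s ^ 2 := by rw [hrw]; ring
    rw [hGrw]
    have hgsplit : a * (g / u1 + G * w1 ^ 4 / u1 ^ 2) + b * (g / u2 + G * w2 ^ 4 / u2 ^ 2)
        = (a * (g / u1) + b * (g / u2)) + (a * (G * t1 ^ 2) + b * (G * t2 ^ 2)) := by
      rw [hrw1, hrw2]; ring
    rw [hgsplit]
    clear_value u t1 t2 s
    by_cases huu : u1 = u2
    · -- same first coordinate: strictness from the elastic part
      have hww : w1 ≠ w2 := fun h => hne (by rw [huu, h])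
      have hwu : w1 * u2 - w2 * u1 ≠ 0 := by
        rw [huu]; intro h
        exact hww (mul_right_cancel₀ (ne_of_gt hu2) (sub_eq_zero.mp h))
      have h1 : g / u ≤ a * (g / u1) + b * (g / u2) := by
        rw [e1, div_le_div_iff₀ hu hden]
        have : 0 ≤ g * (a * b * (u1 - u2) ^ 2) := by positivity
        linarith
      have hA : s < a * t1 + b * t2 := by
        rw [hs_def, e2, div_lt_div_iff₀ hu hden]
        have : 0 < a * b * (w1 * u2 - w2 * u1) ^ 2 := by positivity
        linarith
      have hsq : s ^ 2 < (a * t1 + b * t2) ^ 2 := pow_lt_pow_left₀ hA hs0 (by norm_num)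
      have hfin : G * s ^ 2 < a * (G * t1 ^ 2) + b * (G * t2 ^ 2) := by
        rw [show a * (G * t1 ^ 2) + b * (G * t2 ^ 2) = G * (a * t1 ^ 2 + b * t2 ^ 2) from by ring]
        exact mul_lt_mul_of_pos_left (lt_of_lt_of_le hsq hB) hG
      linarith
    · -- different first coordinates: strictness from the hydrostatic part
      have h1 : g / u < a * (g / u1) + b * (g / u2) := by
        rw [e1, div_lt_div_iff₀ hu hden]
        have hne' : u1 - u2 ≠ 0 := sub_ne_zero.mpr huu
        have : 0 < g * (a * b * (u1 - u2) ^ 2) := by positivity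
        linarith
      have hA : s ≤ a * t1 + b * t2 := by
        rw [hs_def, e2, div_le_div_iff₀ hu hden]
        have : 0 ≤ a * b * (w1 * u2 - w2 * u1) ^ 2 := by positivity
        linarith
      have hsq : s ^ 2 ≤ (a * t1 + b * t2) ^ 2 := pow_le_pow_left₀ hs0 hA 2
      have hfin : G * s ^ 2 ≤ a * (G * t1 ^ 2) + b * (G * t2 ^ 2) := by
        rw [show a * (G * t1 ^ 2) + b * (G * t2 ^ 2) = G * (a * t1 ^ 2 + b * t2 ^ 2) from by ring]
        exact mul_le_mul_of_nonneg_left (le_trans hsq hB) hG.le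
      linarith
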